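/- If V: ℂ² → ℂ is entire with real restriction to ℝ², y ↦ e^{−y²/2} V(iy) is in L¹(ℝ²), and Ṽ(p) := e^{p²/2} ∫ e^{−ipy} e^{−y²/2} V(iy) dy/(2π)² is in L¹(ℝ²), then V(q) = ∫ e^{−|q−p|²/2} Ṽ(p) dp for all q ∈ ℝ², i.e. V = g ∗ (Ṽ dq) with g the standard Gaussian. -/

import Mathlib

open Real MeasureTheory

/-- The modified Fourier transform
`Ṽ(p) = e^{p²/2} ∫ e^{−ipy} e^{−y²/2} V(iy) dy/(2π)²`. -/
noncomputable def modFT (V : ℂ × ℂ → ℂ) (p : ℝ × ℝ) : ℂ :=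
  ((Real.exp ((p.1 ^ 2 + p.2 ^ 2) / 2) : ℝ) : ℂ) *
    ∫ y : ℝ × ℝ, Complex.exp (-Complex.I * ((p.1 * y.1 + p.2 * y.2 : ℝ) : ℂ)) *
      ((Real.exp (-(y.1 ^ 2 + y.2 ^ 2) / 2) : ℝ) : ℂ) *
      V (Complex.I * y.1, Complex.I * y.2) / ((2 * π : ℝ) : ℂ) ^ 2

open Complex Filter Metric

noncomputable def What (V : ℂ × ℂ → ℂ) (p : ℝ × ℝ) : ℂ :=
  ((Real.exp (-(p.1 ^ 2 + p.2 ^ 2) / 2) : ℝ) : ℂ) * modFT V p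

noncomputable def Hfun (V : ℂ × ℂ → ℂ) (z w : ℂ) : ℂ :=
  ∫ p : ℝ × ℝ, Complex.exp (z * p.1 + w * p.2) * What V p

lemma exp_quad_bound (a t : ℝ) : Real.exp (a * t - t ^ 2 / 2) ≤ Real.exp (a ^ 2 / 2) :=
  Real.exp_le_exp.2 (by nlinarith [sq_nonneg (t - a)])

lemma abs_exp_quad_bound (a t : ℝ) :
    |t| * Real.exp (a * t - t ^ 2 / 2) ≤ Real.exp ((|a| + 1) ^ 2 / 2) := by
  have h1 : |t| ≤ Real.exp |t| := (le_add_of_nonneg_right zero_le_one).trans (Real.add_one_le_exp _)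
  calc |t| * Real.exp (a * t - t ^ 2 / 2) ≤ Real.exp |t| * Real.exp (a * t - t ^ 2 / 2) :=
        mul_le_mul_of_nonneg_right h1 (Real.exp_pos _).le
    _ = Real.exp (|t| + (a * t - t ^ 2 / 2)) := (Real.exp_add _ _).symm
    _ ≤ Real.exp ((|a| + 1) ^ 2 / 2) := by
        apply Real.exp_le_exp.2
        have hat : a * t ≤ |a| * |t| := by
          calc a * t ≤ |a * t| := le_abs_self _
            _ = |a| * |t| := abs_mul a t
        nlinarith [sq_nonneg (|t| - (|a| + 1)), _root_.sq_abs t]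

-- norm computation
lemma norm_kernel (V : ℂ × ℂ → ℂ) (z w : ℂ) (p : ℝ × ℝ) :
    ‖Complex.exp (z * p.1 + w * p.2) * What V p‖ =
      Real.exp (z.re * p.1 - p.1 ^ 2 / 2) * Real.exp (w.re * p.2 - p.2 ^ 2 / 2) *
        ‖modFT V p‖ := by
  rw [What, norm_mul, norm_mul, Complex.norm_exp,
    Complex.norm_real, Real.norm_eq_abs, abs_of_pos (Real.exp_pos _), ← Real.exp_add]
  have : (z * ↑p.1 + w * ↑p.2).re = z.re * p.1 + w.re * p.2 := by simp
  rw [this, ← mul_assoc, ← Real.exp_add]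
  congr 2
  ring

lemma integrable_kernel (V : ℂ × ℂ → ℂ) (hFT : Integrable (modFT V)) (z w : ℂ) :
    Integrable (fun p : ℝ × ℝ => Complex.exp (z * p.1 + w * p.2) * What V p) := by
  have : (fun p : ℝ × ℝ => Complex.exp (z * p.1 + w * p.2) * What V p) =
      fun p : ℝ × ℝ => (Complex.exp (z * p.1 + w * p.2) *
        ((Real.exp (-(p.1 ^ 2 + p.2 ^ 2) / 2) : ℝ) : ℂ)) * modFT V p := by
    funext p; rw [What]; ring
  rw [this]
  apply hFT.bdd_mul (c := Real.exp (z.re ^ 2 / 2) * Real.exp (w.re ^ 2 / 2))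
  · apply Continuous.aestronglyMeasurable
    fun_prop
  · refine Filter.Eventually.of_forall fun p => ?_
    have h := norm_kernel V z w p
    have e1 := exp_quad_bound z.re p.1
    have e2 := exp_quad_bound w.re p.2
    calc ‖Complex.exp (z * ↑p.1 + w * ↑p.2) * ((Real.exp (-(p.1 ^ 2 + p.2 ^ 2) / 2) : ℝ) : ℂ)‖
        = Real.exp (z.re * p.1 - p.1 ^ 2 / 2) * Real.exp (w.re * p.2 - p.2 ^ 2 / 2) := by
          rw [norm_mul, Complex.norm_exp, Complex.norm_real,
            Real.norm_eq_abs, abs_of_pos (Real.exp_pos _)]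
          have : (z * ↑p.1 + w * ↑p.2).re = z.re * p.1 + w.re * p.2 := by simp
          rw [this, ← Real.exp_add, ← Real.exp_add]
          ring_nf
      _ ≤ Real.exp (z.re ^ 2 / 2) * Real.exp (w.re ^ 2 / 2) :=
          mul_le_mul e1 e2 (Real.exp_pos _).le (Real.exp_pos _).le

lemma norm_kernel' (V : ℂ × ℂ → ℂ) (z w : ℂ) (p : ℝ × ℝ) :
    ‖Complex.exp (z * p.1 + w * p.2) * (p.1 : ℂ) * What V p‖ =
      |p.1| * (Real.exp (z.re * p.1 - p.1 ^ 2 / 2) * Real.exp (w.re * p.2 - p.2 ^ 2 / 2)) *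
        ‖modFT V p‖ := by
  have : Complex.exp (z * p.1 + w * p.2) * (p.1 : ℂ) * What V p =
      (p.1 : ℂ) * (Complex.exp (z * p.1 + w * p.2) * What V p) := by ring
  rw [this, norm_mul, norm_kernel, Complex.norm_real, Real.norm_eq_abs]
  ring

lemma diff_H1 (V : ℂ × ℂ → ℂ) (hFT : Integrable (modFT V)) (w : ℂ) :
    Differentiable ℂ (fun z => Hfun V z w) := by
  intro z₀
  set bound : ℝ × ℝ → ℝ := fun p =>
    Real.exp ((|z₀.re| + 2) ^ 2 / 2) * Real.exp (w.re ^ 2 / 2) * ‖modFT V p‖ with hbound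
  have key := hasDerivAt_integral_of_dominated_loc_of_deriv_le (𝕜 := ℂ)
    (μ := (volume : Measure (ℝ × ℝ)))
    (F := fun z p => Complex.exp (z * p.1 + w * p.2) * What V p)
    (F' := fun z p => Complex.exp (z * p.1 + w * p.2) * (p.1 : ℂ) * What V p)
    (x₀ := z₀) (bound := bound) (s := ball z₀ 1) (ball_mem_nhds z₀ one_pos)
    (by filter_upwards with z using (integrable_kernel V hFT z w).1)
    (integrable_kernel V hFT z₀ w)
    (by
      have : (fun p : ℝ × ℝ => Complex.exp (z₀ * p.1 + w * p.2) * (p.1 : ℂ) * What V p) =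
          fun p : ℝ × ℝ => (Complex.exp (z₀ * p.1 + w * p.2) * (p.1 : ℂ) *
            ((Real.exp (-(p.1 ^ 2 + p.2 ^ 2) / 2) : ℝ) : ℂ)) * modFT V p := by
        funext p; rw [What]; ring
      show AEStronglyMeasurable
        (fun p : ℝ × ℝ => Complex.exp (z₀ * p.1 + w * p.2) * (p.1 : ℂ) * What V p) volume
      rw [this]
      exact (Continuous.aestronglyMeasurable (by fun_prop)).mul hFT.1)
    (by
      filter_upwards with p z hz
      rw [norm_kernel']
      rw [hbound]
      have hz1 : |z.re| ≤ |z₀.re| + 1 := by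
        have := mem_ball_iff_norm.1 hz
        have h2 : |z.re - z₀.re| ≤ ‖z - z₀‖ := by
          simpa using Complex.abs_re_le_norm (z - z₀)
        have := abs_sub_abs_le_abs_sub z.re z₀.re
        linarith
      have h1 : |p.1| * Real.exp (z.re * p.1 - p.1 ^ 2 / 2) ≤ Real.exp ((|z₀.re| + 2) ^ 2 / 2) := by
        calc |p.1| * Real.exp (z.re * p.1 - p.1 ^ 2 / 2) ≤ Real.exp ((|z.re| + 1) ^ 2 / 2) :=
              abs_exp_quad_bound z.re p.1
          _ ≤ Real.exp ((|z₀.re| + 2) ^ 2 / 2) := by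
              apply Real.exp_le_exp.2
              have h0 : (0:ℝ) ≤ |z.re| + 1 := by positivity
              nlinarith [abs_nonneg z₀.re]
      have h2 := exp_quad_bound w.re p.2
      calc |p.1| * (Real.exp (z.re * p.1 - p.1 ^ 2 / 2) * Real.exp (w.re * p.2 - p.2 ^ 2 / 2)) *
            ‖modFT V p‖
          = (|p.1| * Real.exp (z.re * p.1 - p.1 ^ 2 / 2)) * Real.exp (w.re * p.2 - p.2 ^ 2 / 2) *
            ‖modFT V p‖ := by ring
        _ ≤ Real.exp ((|z₀.re| + 2) ^ 2 / 2) * Real.exp (w.re ^ 2 / 2) * ‖modFT V p‖ :=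
            mul_le_mul_of_nonneg_right
              (mul_le_mul h1 h2 (Real.exp_pos _).le (Real.exp_pos _).le) (norm_nonneg _))
    (hFT.norm.const_mul _)
    (by
      filter_upwards with p z hz
      have h : HasDerivAt (fun z : ℂ => z * (p.1 : ℂ) + w * p.2) (p.1 : ℂ) z := by
        simpa using ((hasDerivAt_id z).mul_const (p.1 : ℂ)).add_const (w * p.2)
      exact (h.cexp).mul_const (What V p))
  exact ⟨_, key.2⟩

lemma norm_kernel'' (V : ℂ × ℂ → ℂ) (z w : ℂ) (p : ℝ × ℝ) :
    ‖Complex.exp (z * p.1 + w * p.2) * (p.2 : ℂ) * What V p‖ =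
      |p.2| * (Real.exp (z.re * p.1 - p.1 ^ 2 / 2) * Real.exp (w.re * p.2 - p.2 ^ 2 / 2)) *
        ‖modFT V p‖ := by
  have : Complex.exp (z * p.1 + w * p.2) * (p.2 : ℂ) * What V p =
      (p.2 : ℂ) * (Complex.exp (z * p.1 + w * p.2) * What V p) := by ring
  rw [this, norm_mul, norm_kernel, Complex.norm_real, Real.norm_eq_abs]
  ring

lemma diff_H2 (V : ℂ × ℂ → ℂ) (hFT : Integrable (modFT V)) (z : ℂ) :
    Differentiable ℂ (fun w => Hfun V z w) := by
  intro w₀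
  set bound : ℝ × ℝ → ℝ := fun p =>
    Real.exp (z.re ^ 2 / 2) * Real.exp ((|w₀.re| + 2) ^ 2 / 2) * ‖modFT V p‖ with hbound
  have key := hasDerivAt_integral_of_dominated_loc_of_deriv_le (𝕜 := ℂ)
    (μ := (volume : Measure (ℝ × ℝ)))
    (F := fun w p => Complex.exp (z * p.1 + w * p.2) * What V p)
    (F' := fun w p => Complex.exp (z * p.1 + w * p.2) * (p.2 : ℂ) * What V p)
    (x₀ := w₀) (bound := bound) (s := ball w₀ 1) (ball_mem_nhds w₀ one_pos)
    (by filter_upwards with w using (integrable_kernel V hFT z w).1)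
    (integrable_kernel V hFT z w₀)
    (by
      have : (fun p : ℝ × ℝ => Complex.exp (z * p.1 + w₀ * p.2) * (p.2 : ℂ) * What V p) =
          fun p : ℝ × ℝ => (Complex.exp (z * p.1 + w₀ * p.2) * (p.2 : ℂ) *
            ((Real.exp (-(p.1 ^ 2 + p.2 ^ 2) / 2) : ℝ) : ℂ)) * modFT V p := by
        funext p; rw [What]; ring
      show AEStronglyMeasurable
        (fun p : ℝ × ℝ => Complex.exp (z * p.1 + w₀ * p.2) * (p.2 : ℂ) * What V p) volume
      rw [this]
      exact (Continuous.aestronglyMeasurable (by fun_prop)).mul hFT.1)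
    (by
      filter_upwards with p w hw
      rw [norm_kernel'', hbound]
      have hw1 : |w.re| ≤ |w₀.re| + 1 := by
        have := mem_ball_iff_norm.1 hw
        have h2 : |w.re - w₀.re| ≤ ‖w - w₀‖ := by
          simpa using Complex.abs_re_le_norm (w - w₀)
        have := abs_sub_abs_le_abs_sub w.re w₀.re
        linarith
      have h1 : |p.2| * Real.exp (w.re * p.2 - p.2 ^ 2 / 2) ≤
          Real.exp ((|w₀.re| + 2) ^ 2 / 2) := by
        calc |p.2| * Real.exp (w.re * p.2 - p.2 ^ 2 / 2) ≤ Real.exp ((|w.re| + 1) ^ 2 / 2) :=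
              abs_exp_quad_bound w.re p.2
          _ ≤ Real.exp ((|w₀.re| + 2) ^ 2 / 2) := by
              apply Real.exp_le_exp.2
              have h0 : (0:ℝ) ≤ |w.re| + 1 := by positivity
              nlinarith [abs_nonneg w₀.re]
      have h2 := exp_quad_bound z.re p.1
      calc |p.2| * (Real.exp (z.re * p.1 - p.1 ^ 2 / 2) * Real.exp (w.re * p.2 - p.2 ^ 2 / 2)) *
            ‖modFT V p‖
          = Real.exp (z.re * p.1 - p.1 ^ 2 / 2) * (|p.2| * Real.exp (w.re * p.2 - p.2 ^ 2 / 2)) *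
            ‖modFT V p‖ := by ring
        _ ≤ Real.exp (z.re ^ 2 / 2) * Real.exp ((|w₀.re| + 2) ^ 2 / 2) * ‖modFT V p‖ :=
            mul_le_mul_of_nonneg_right
              (mul_le_mul h2 h1 (mul_nonneg (abs_nonneg _) (Real.exp_pos _).le)
                (Real.exp_pos _).le) (norm_nonneg _))
    (hFT.norm.const_mul _)
    (by
      filter_upwards with p w hw
      have h : HasDerivAt (fun w : ℂ => z * (p.1 : ℂ) + w * p.2) (p.2 : ℂ) w := by
        simpa using (((hasDerivAt_id w).mul_const (p.2 : ℂ)).const_add (z * p.1))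
      exact (h.cexp).mul_const (What V p))
  exact ⟨_, key.2⟩

open scoped FourierTransform RealInnerProductSpace

noncomputable def e2 : EuclideanSpace ℝ (Fin 2) ≃ᵐ ℝ × ℝ :=
  (MeasurableEquiv.toLp 2 (Fin 2 → ℝ)).symm.trans MeasurableEquiv.finTwoArrow

lemma e2_mp : MeasurePreserving e2 :=
  (EuclideanSpace.volume_preserving_symm_measurableEquiv_toLp (Fin 2)).trans
    (volume_preserving_finTwoArrow ℝ)

lemma e2_apply (x : EuclideanSpace ℝ (Fin 2)) : e2 x = (x 0, x 1) := by
  simp [e2, MeasurableEquiv.trans, MeasurableEquiv.finTwoArrow, MeasurableEquiv.toLp]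
  exact ⟨rfl, rfl⟩

lemma transfer_integral (f : ℝ × ℝ → ℂ) :
    ∫ x : EuclideanSpace ℝ (Fin 2), f (x 0, x 1) = ∫ y : ℝ × ℝ, f y := by
  have := e2_mp.integral_comp e2.measurableEmbedding f
  calc ∫ x : EuclideanSpace ℝ (Fin 2), f (x 0, x 1)
      = ∫ x : EuclideanSpace ℝ (Fin 2), f (e2 x) := by simp_rw [e2_apply]
    _ = ∫ y : ℝ × ℝ, f y := this

section inv
variable (V : ℂ × ℂ → ℂ)

noncomputable def Wfun : ℝ × ℝ → ℂ := fun y =>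
  ((Real.exp (-(y.1 ^ 2 + y.2 ^ 2) / 2) : ℝ) : ℂ) * V (Complex.I * y.1, Complex.I * y.2)

lemma What_eq (p : ℝ × ℝ) :
    What V p = (((2 * π : ℝ) : ℂ) ^ 2)⁻¹ *
      ∫ y : ℝ × ℝ, Complex.exp (-Complex.I * ((p.1 * y.1 + p.2 * y.2 : ℝ) : ℂ)) * Wfun V y := by
  rw [What, modFT, ← mul_assoc, ← Complex.ofReal_mul, ← Real.exp_add]
  have h0 : -(p.1 ^ 2 + p.2 ^ 2) / 2 + (p.1 ^ 2 + p.2 ^ 2) / 2 = 0 := by ring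
  rw [h0, Real.exp_zero, Complex.ofReal_one, one_mul, integral_div, div_eq_inv_mul]
  congr 1
  apply integral_congr_ae
  filter_upwards with y
  rw [Wfun]
  ring

lemma fourier_W' (hFT : Integrable (modFT V)) (ξ : EuclideanSpace ℝ (Fin 2)) :
    𝓕 (fun x : EuclideanSpace ℝ (Fin 2) => Wfun V (x 0, x 1)) ξ =
      ((2 * π : ℝ) : ℂ) ^ 2 * What V (2 * π * ξ 0, 2 * π * ξ 1) := by
  rw [Real.fourier_eq']
  have h1 : ∀ x : EuclideanSpace ℝ (Fin 2),
      Complex.exp (((-2 * π * (inner ℝ x ξ : ℝ) : ℝ) : ℂ) * Complex.I) • Wfun V (x 0, x 1) =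
      (fun y : ℝ × ℝ => Complex.exp
        (-Complex.I * (((2 * π * ξ 0) * y.1 + (2 * π * ξ 1) * y.2 : ℝ) : ℂ)) * Wfun V y)
        (x 0, x 1) := by
    intro x
    rw [smul_eq_mul]
    congr 1
    have : (inner ℝ x ξ : ℝ) = x 0 * ξ 0 + x 1 * ξ 1 := by
      simp [PiLp.inner_apply, Fin.sum_univ_two]
      ring
    rw [this]
    push_cast
    ring
  simp_rw [h1]
  have h2π : ((2 * π : ℝ) : ℂ) ^ 2 ≠ 0 := by
    apply pow_ne_zero
    exact_mod_cast mul_ne_zero two_ne_zero Real.pi_ne_zero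
  rw [What_eq, ← mul_assoc, mul_inv_cancel₀ h2π, one_mul, ← transfer_integral]

end inv

section inv2
variable (V : ℂ × ℂ → ℂ)

lemma What_integrable (hFT : Integrable (modFT V)) : Integrable (What V) := by
  have := integrable_kernel V hFT 0 0
  refine this.congr (Filter.Eventually.of_forall fun p => ?_)
  simp

lemma fourier_W'_integrable (hFT : Integrable (modFT V)) :
    Integrable (𝓕 (fun x : EuclideanSpace ℝ (Fin 2) => Wfun V (x 0, x 1))) := by
  have h2π : (2 * π : ℝ) ≠ 0 := mul_ne_zero two_ne_zero Real.pi_ne_zero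
  have h1 : Integrable (fun p : ℝ × ℝ => What V ((2 * π) • p)) :=
    (integrable_comp_smul_iff volume (What V) h2π).2 (What_integrable V hFT)
  have h2 : Integrable (fun p : ℝ × ℝ =>
      ((2 * π : ℝ) : ℂ) ^ 2 * What V ((2 * π) • p)) := h1.const_mul _
  have h3 := (e2_mp.integrable_comp_emb e2.measurableEmbedding).2 h2
  refine h3.congr (Filter.Eventually.of_forall fun ξ => ?_)
  show ((2 * π : ℝ) : ℂ) ^ 2 * What V ((2 * π) • e2 ξ) = _
  rw [fourier_W' V hFT ξ, e2_apply]
  congr 1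

lemma W'_integrable (hL1 : Integrable (Wfun V)) :
    Integrable (fun x : EuclideanSpace ℝ (Fin 2) => Wfun V (x 0, x 1)) := by
  have h3 := (e2_mp.integrable_comp_emb e2.measurableEmbedding).2 hL1
  refine h3.congr (Filter.Eventually.of_forall fun ξ => ?_)
  show Wfun V (e2 ξ) = _
  rw [e2_apply]

lemma Hfun_on_imag (hVc : Continuous V) (hL1 : Integrable (Wfun V))
    (hFT : Integrable (modFT V)) (y : ℝ × ℝ) :
    Hfun V (Complex.I * y.1) (Complex.I * y.2) = Wfun V y := by
  have hW'cont : Continuous (fun x : EuclideanSpace ℝ (Fin 2) => Wfun V (x 0, x 1)) := by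
    apply Continuous.mul
    · fun_prop
    · exact hVc.comp (by fun_prop)
  have hinv := hW'cont.fourierInv_fourier_eq (W'_integrable V hL1) (fourier_W'_integrable V hFT)
  -- evaluate at x = e2.symm y
  set x : EuclideanSpace ℝ (Fin 2) := e2.symm y with hx
  have hxy : (x 0, x 1) = y := by rw [← e2_apply, hx, e2.apply_symm_apply]
  have hx0 : x 0 = y.1 := by rw [← hxy]
  have hx1 : x 1 = y.2 := by rw [← hxy]
  have heval := congrFun hinv x
  rw [Real.fourierInv_eq'] at heval
  have h2π : (2 * π : ℝ) ≠ 0 := mul_ne_zero two_ne_zero Real.pi_ne_zero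
  set K : ℝ × ℝ → ℂ := fun p =>
    Complex.exp (Complex.I * y.1 * p.1 + Complex.I * y.2 * p.2) * What V p with hK
  have key : (∫ ξ : EuclideanSpace ℝ (Fin 2), Complex.exp (((2 * π * (inner ℝ ξ x : ℝ) : ℝ) : ℂ)
      * Complex.I) • 𝓕 (fun x : EuclideanSpace ℝ (Fin 2) => Wfun V (x 0, x 1)) ξ)
      = Hfun V (Complex.I * y.1) (Complex.I * y.2) := by
    have h1 : ∀ ξ : EuclideanSpace ℝ (Fin 2),
        Complex.exp (((2 * π * (inner ℝ ξ x : ℝ) : ℝ) : ℂ) * Complex.I)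
          • 𝓕 (fun x : EuclideanSpace ℝ (Fin 2) => Wfun V (x 0, x 1)) ξ =
        (fun p : ℝ × ℝ => ((2 * π : ℝ) : ℂ) ^ 2 * K ((2 * π) • p)) (ξ 0, ξ 1) := by
      intro ξ
      rw [smul_eq_mul, fourier_W' V hFT ξ]
      have hinn : (inner ℝ ξ x : ℝ) = ξ 0 * y.1 + ξ 1 * y.2 := by
        simp [PiLp.inner_apply, Fin.sum_univ_two, hx0, hx1]
        ring
      have hsm : (2 * π) • ((ξ 0 : ℝ), (ξ 1 : ℝ)) = ((2 * π * ξ 0 : ℝ), (2 * π * ξ 1 : ℝ)) := rfl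
      show _ = ((2 * π : ℝ) : ℂ) ^ 2 * K ((2 * π) • ((ξ 0 : ℝ), (ξ 1 : ℝ)))
      rw [hinn, hsm, hK]
      push_cast
      ring
    calc (∫ ξ : EuclideanSpace ℝ (Fin 2), Complex.exp (((2 * π * (inner ℝ ξ x : ℝ) : ℝ) : ℂ)
        * Complex.I) • 𝓕 (fun x : EuclideanSpace ℝ (Fin 2) => Wfun V (x 0, x 1)) ξ)
        = ∫ ξ : EuclideanSpace ℝ (Fin 2),
            (fun p : ℝ × ℝ => ((2 * π : ℝ) : ℂ) ^ 2 * K ((2 * π) • p)) (ξ 0, ξ 1) :=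
          integral_congr_ae (Filter.Eventually.of_forall h1)
      _ = ∫ p : ℝ × ℝ, ((2 * π : ℝ) : ℂ) ^ 2 * K ((2 * π) • p) :=
          transfer_integral (fun p : ℝ × ℝ => ((2 * π : ℝ) : ℂ) ^ 2 * K ((2 * π) • p))
      _ = ((2 * π : ℝ) : ℂ) ^ 2 * ∫ p : ℝ × ℝ, K ((2 * π) • p) := integral_const_mul _ _
      _ = ((2 * π : ℝ) : ℂ) ^ 2 *
          (|((2 * π : ℝ) ^ Module.finrank ℝ (ℝ × ℝ))⁻¹| • ∫ p : ℝ × ℝ, K p) := by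
          rw [Measure.integral_comp_smul volume K (2 * π)]
      _ = ∫ p : ℝ × ℝ, K p := by
          have hfr : Module.finrank ℝ (ℝ × ℝ) = 2 := by simp
          rw [hfr]
          have habs : |((2 * π : ℝ) ^ 2)⁻¹| = ((2 * π : ℝ) ^ 2)⁻¹ :=
            abs_of_pos (by positivity)
          rw [habs, Complex.real_smul, ← mul_assoc, Complex.ofReal_inv, Complex.ofReal_pow,
            mul_inv_cancel₀ (by
              apply pow_ne_zero
              exact_mod_cast mul_ne_zero two_ne_zero Real.pi_ne_zero), one_mul]
      _ = Hfun V (Complex.I * y.1) (Complex.I * y.2) := by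
          rw [Hfun, hK]
  rw [heval] at key
  rw [hxy] at key
  exact key.symm.trans rfl ▸ key.symm

end inv2

open scoped Topology in
lemma zero_on_imag {f : ℂ → ℂ} (hf : Differentiable ℂ f)
    (h0 : ∀ t : ℝ, f (Complex.I * t) = 0) : ∀ z, f z = 0 := by
  have han : AnalyticOnNhd ℂ f Set.univ := analyticOnNhd_univ_iff_differentiable.2 hf
  have hfreq : ∃ᶠ z in 𝓝[≠] (0 : ℂ), f z = 0 := by
    have htend : Tendsto (fun n : ℕ => Complex.I * ((n : ℝ) + 1)⁻¹) atTop (𝓝[≠] (0:ℂ)) := by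
      apply tendsto_nhdsWithin_of_tendsto_nhds_of_eventually_within
      · have : Tendsto (fun n : ℕ => (((n : ℝ) + 1)⁻¹ : ℝ)) atTop (𝓝 0) :=
          tendsto_one_div_add_atTop_nhds_zero_nat.congr (by intro n; simp [one_div])
        have := (Complex.ofRealCLM.continuous.tendsto 0).comp this
        simpa using (this.const_mul Complex.I)
      · filter_upwards with n
        simp only [Set.mem_compl_iff, Set.mem_singleton_iff]
        intro h
        field_simp at h
        norm_cast at h
        simp [Complex.I_ne_zero] at h
        exact Nat.cast_add_one_ne_zero n h
    exact htend.frequently (Filter.Frequently.of_forall fun n => h0 _)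
  intro z
  exact han.eqOn_zero_of_preconnected_of_frequently_eq_zero isPreconnected_univ
    (Set.mem_univ 0) hfreq (Set.mem_univ z)

lemma sq_imag_eq (s t : ℝ) :
    ((Complex.I * s) ^ 2 + (Complex.I * t) ^ 2) / 2 = ((-(s ^ 2 + t ^ 2) / 2 : ℝ) : ℂ) := by
  have h1 : (Complex.I * (s:ℂ)) ^ 2 = -((s:ℂ) ^ 2) := by
    rw [mul_pow, Complex.I_sq]; ring
  have h2 : (Complex.I * (t:ℂ)) ^ 2 = -((t:ℂ) ^ 2) := by
    rw [mul_pow, Complex.I_sq]; ring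
  rw [h1, h2]
  push_cast
  ring

lemma Hfun_eq (V : ℂ × ℂ → ℂ) (hV : Differentiable ℂ V) (hL1 : Integrable (Wfun V))
    (hFT : Integrable (modFT V)) (z w : ℂ) :
    Hfun V z w = Complex.exp ((z ^ 2 + w ^ 2) / 2) * V (z, w) := by
  have hVc : Continuous V := hV.continuous
  have step1 : ∀ t : ℝ, ∀ z : ℂ,
      Hfun V z (Complex.I * t) -
        Complex.exp ((z ^ 2 + (Complex.I * t) ^ 2) / 2) * V (z, Complex.I * t) = 0 := by
    intro t
    apply zero_on_imag
    · apply Differentiable.sub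
      · exact diff_H1 V hFT _
      · exact (Differentiable.cexp (by fun_prop)).mul
          (hV.comp (differentiable_id.prodMk (differentiable_const _)))
    · intro s
      have h1 := Hfun_on_imag V hVc hL1 hFT (s, t)
      have h2 : Complex.exp (((Complex.I * s) ^ 2 + (Complex.I * t) ^ 2) / 2) =
          ((Real.exp (-(s ^ 2 + t ^ 2) / 2) : ℝ) : ℂ) := by
        rw [sq_imag_eq, Complex.ofReal_exp]
      rw [h2]
      simp only [Wfun] at h1
      rw [sub_eq_zero]
      exact h1
  have step2 : ∀ z : ℂ, ∀ w : ℂ,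
      Hfun V z w - Complex.exp ((z ^ 2 + w ^ 2) / 2) * V (z, w) = 0 := by
    intro z
    apply zero_on_imag
    · apply Differentiable.sub
      · exact diff_H2 V hFT _
      · exact (Differentiable.cexp (by fun_prop)).mul
          (hV.comp ((differentiable_const _).prodMk differentiable_id))
    · intro t
      exact step1 t z
  exact sub_eq_zero.1 (step2 z w)


/-- If `V : ℂ² → ℂ` is entire, real on `ℝ²`, with `y ↦ e^{−y²/2} V(iy)` in `L¹(ℝ²)`
and `Ṽ ∈ L¹(ℝ²)`, then `V = g ∗ (Ṽ dq)` with `g` the standard Gaussian: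
`V(q) = ∫ e^{−|q−p|²/2} Ṽ(p) dp` for all `q ∈ ℝ²`. -/
theorem gaussian_convolution_representation (V : ℂ × ℂ → ℂ)
    (hV : Differentiable ℂ V)
    (hreal : ∀ y : ℝ × ℝ, ((V ((y.1 : ℂ), (y.2 : ℂ))).im = 0))
    (hL1 : Integrable (fun y : ℝ × ℝ =>
      ((Real.exp (-(y.1 ^ 2 + y.2 ^ 2) / 2) : ℝ) : ℂ) *
        V (Complex.I * y.1, Complex.I * y.2)))
    (hFT : Integrable (modFT V)) :
    ∀ q : ℝ × ℝ, V ((q.1 : ℂ), (q.2 : ℂ)) =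
      ∫ p : ℝ × ℝ,
        ((Real.exp (-((q.1 - p.1) ^ 2 + (q.2 - p.2) ^ 2) / 2) : ℝ) : ℂ) * modFT V p := by
  intro q
  have hWfun : Integrable (Wfun V) := hL1
  have key := Hfun_eq V hV hWfun hFT (q.1 : ℂ) (q.2 : ℂ)
  have hptwise : ∀ p : ℝ × ℝ,
      ((Real.exp (-((q.1 - p.1) ^ 2 + (q.2 - p.2) ^ 2) / 2) : ℝ) : ℂ) * modFT V p =
      ((Real.exp (-(q.1 ^ 2 + q.2 ^ 2) / 2) : ℝ) : ℂ) *
        (Complex.exp ((q.1 : ℂ) * p.1 + (q.2 : ℂ) * p.2) * What V p) := by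
    intro p
    have hcexp : Complex.exp ((q.1 : ℂ) * p.1 + (q.2 : ℂ) * p.2) =
        ((Real.exp (q.1 * p.1 + q.2 * p.2) : ℝ) : ℂ) := by
      rw [Complex.ofReal_exp]
      push_cast
      ring
    rw [hcexp, What]
    have hre : Real.exp (-((q.1 - p.1) ^ 2 + (q.2 - p.2) ^ 2) / 2) =
        Real.exp (-(q.1 ^ 2 + q.2 ^ 2) / 2) * (Real.exp (q.1 * p.1 + q.2 * p.2) *
          Real.exp (-(p.1 ^ 2 + p.2 ^ 2) / 2)) := by
      rw [← Real.exp_add, ← Real.exp_add]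
      congr 1
      ring
    rw [hre]
    push_cast
    ring
  calc V ((q.1 : ℂ), (q.2 : ℂ))
      = ((Real.exp (-(q.1 ^ 2 + q.2 ^ 2) / 2) : ℝ) : ℂ) * Hfun V (q.1 : ℂ) (q.2 : ℂ) := by
        rw [key]
        have h2 : Complex.exp (((q.1 : ℂ) ^ 2 + (q.2 : ℂ) ^ 2) / 2) =
            ((Real.exp ((q.1 ^ 2 + q.2 ^ 2) / 2) : ℝ) : ℂ) := by
          rw [Complex.ofReal_exp]
          push_cast
          ring
        rw [h2, ← mul_assoc, ← Complex.ofReal_mul, ← Real.exp_add]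
        have h3 : -(q.1 ^ 2 + q.2 ^ 2) / 2 + (q.1 ^ 2 + q.2 ^ 2) / 2 = 0 := by ring
        rw [h3, Real.exp_zero, Complex.ofReal_one, one_mul]
    _ = ∫ p : ℝ × ℝ, ((Real.exp (-(q.1 ^ 2 + q.2 ^ 2) / 2) : ℝ) : ℂ) *
          (Complex.exp ((q.1 : ℂ) * p.1 + (q.2 : ℂ) * p.2) * What V p) := by
        rw [Hfun, ← integral_const_mul]
    _ = ∫ p : ℝ × ℝ,
          ((Real.exp (-((q.1 - p.1) ^ 2 + (q.2 - p.2) ^ 2) / 2) : ℝ) : ℂ) * modFT V p :=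
        integral_congr_ae (Filter.Eventually.of_forall fun p => (hptwise p).symm)
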